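/- There exists a problem f :⊆ ℕ^ℕ ⇉ ℕ^ℕ that is discontinuous (has no continuous realizer) but not effectively discontinuous. -/

import Mathlib

noncomputable section

/-- Baire space `ℕ^ℕ`. -/
abbrev Baire : Type := ℕ → ℕ

/-- The Cantor pairing `⟨n,k⟩ = (n+k)(n+k+1)/2 + k`. -/
def cpair (n k : ℕ) : ℕ := (n + k) * (n + k + 1) / 2 + k

/-- The inverse of the Cantor pairing. -/
noncomputable def cunpair (m : ℕ) : ℕ × ℕ :=
  Classical.epsilon fun x : ℕ × ℕ => cpair x.1 x.2 = m

/-- A fixed bijective numbering `w : ℕ → List ℕ` of finite words. -/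
def word (n : ℕ) : List ℕ := Denumerable.ofNat (List ℕ) n

/-- `l` is a finite prefix of the infinite sequence `p`. -/
def IsPrefixOf (l : List ℕ) (p : Baire) : Prop := l = (List.range l.length).map p

/-- Two words are comparable in the prefix order. -/
def WordComparable (u v : List ℕ) : Prop := u <+: v ∨ v <+: u

/-- The word `w(n_i)` decoded from the `i`-th entry of the code `q`. -/
noncomputable def wn (q : Baire) (i : ℕ) : List ℕ := word (cunpair (q i)).1

/-- The word `w(k_i)` decoded from the `i`-th entry of the code `q`. -/
noncomputable def wk (q : Baire) (i : ℕ) : List ℕ := word (cunpair (q i)).2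

/-- The code `q` is consistent. -/
def ConsistentCode (q : Baire) : Prop :=
  ∀ i j, WordComparable (wn q i) (wn q j) → WordComparable (wk q i) (wk q j)

/-- The continuous partial function `Φ_q :⊆ ℕ^ℕ → ℕ^ℕ` coded by `q`. -/
noncomputable def Phi (q : Baire) : Baire →. Baire := fun p =>
  ⟨ConsistentCode q ∧ ∀ m : ℕ, ∃ i, IsPrefixOf (wn q i) p ∧ m < (wk q i).length,
   fun _ => Classical.epsilon fun x : Baire =>
      ∀ i, IsPrefixOf (wn q i) p → IsPrefixOf (wk q i) x⟩

/-- The pairing `⟨q,p⟩` on Baire space. -/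
def bpair (q p : Baire) : Baire := fun n => if n % 2 = 0 then q (n / 2) else p (n / 2)

/-- Even part of a sequence. -/
def evens (r : Baire) : Baire := fun n => r (2 * n)

/-- Odd part of a sequence. -/
def odds (r : Baire) : Baire := fun n => r (2 * n + 1)

/-- The universal function `U(⟨q,p⟩) = Φ_q(p)`. -/
noncomputable def U : Baire →. Baire := fun r => Phi (evens r) (odds r)

/-- `h` is monotone for the prefix order. -/
def MonotoneWord (h : List ℕ → List ℕ) : Prop := ∀ u v, u <+: v → h u <+: h v

/-- `h` approximates the partial function `F`. -/
def Approximates (h : List ℕ → List ℕ) (F : Baire →. Baire) : Prop :=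
  ∀ p, ∀ hp : (F p).Dom,
    (∀ v, IsPrefixOf v p → IsPrefixOf (h v) ((F p).get hp)) ∧
    (∀ m : ℕ, ∃ v, IsPrefixOf v p ∧ m < (h v).length)

/-- `F :⊆ ℕ^ℕ → ℕ^ℕ` is continuous: some monotone word function approximates it. -/
def ContinuousPF (F : Baire →. Baire) : Prop := ∃ h, MonotoneWord h ∧ Approximates h F

/-- `F :⊆ ℕ^ℕ → ℕ^ℕ` is computable: some computable monotone word function approximates it. -/
def ComputablePF (F : Baire →. Baire) : Prop :=
  ∃ h, Computable h ∧ MonotoneWord h ∧ Approximates h F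

/-- A total function is computable iff it is computable as a partial function with full domain. -/
def ComputableTotal (F : Baire → Baire) : Prop := ComputablePF fun p => Part.some (F p)

/-- A problem (multivalued function on Baire space). -/
abbrev Problem : Type := Baire → Set Baire

/-- `F` is a realizer of the problem `f`. -/
def Realizes (F : Baire →. Baire) (f : Problem) : Prop :=
  ∀ p, (f p).Nonempty → ∃ h : (F p).Dom, (F p).get h ∈ f p

/-- `f` is continuous: it has a continuous realizer. -/
def ContinuousProblem (f : Problem) : Prop := ∃ F, ContinuousPF F ∧ Realizes F f

/-- The discontinuity problem `DIS`. -/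
noncomputable def DIS : Problem := fun p => {q | q ∉ U p}

/-- `D` is a discontinuity function for `f`. -/
def DiscontinuityFunction (D : Baire → Baire) (f : Problem) : Prop :=
  ∀ q, (f (D q)).Nonempty ∧ ∀ y ∈ Phi q (D q), y ∉ f (D q)

/-- `f` is computably discontinuous. -/
def ComputablyDiscontinuous (f : Problem) : Prop :=
  ∃ D, ComputableTotal D ∧ DiscontinuityFunction D f

/-- `f` is effectively discontinuous. -/
def EffectivelyDiscontinuous (f : Problem) : Prop :=
  ∃ D : Baire → Baire, Continuous D ∧ DiscontinuityFunction D f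

/-- Weihrauch reducibility `f ≤_W g`. -/
def WeihrauchRed (f g : Problem) : Prop :=
  ∃ H K : Baire →. Baire, ComputablePF H ∧ ComputablePF K ∧
    ∀ G : Baire →. Baire, Realizes G g →
      Realizes (fun p => (K p).bind fun s => (G s).bind fun t => H (bpair p t)) f

/-- Strong Weihrauch reducibility `f ≤_sW g`. -/
def StrongWeihrauchRed (f g : Problem) : Prop :=
  ∃ H K : Baire →. Baire, ComputablePF H ∧ ComputablePF K ∧
    ∀ G : Baire →. Baire, Realizes G g →
      Realizes (fun p => (K p).bind fun s => (G s).bind fun t => H t) f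

/-- Continuous Weihrauch reducibility `f ≤*_W g`. -/
def ContWeihrauchRed (f g : Problem) : Prop :=
  ∃ H K : Baire →. Baire, ContinuousPF H ∧ ContinuousPF K ∧
    ∀ G : Baire →. Baire, Realizes G g →
      Realizes (fun p => (K p).bind fun s => (G s).bind fun t => H (bpair p t)) f

/-- Continuous strong Weihrauch reducibility `f ≤*_sW g`. -/
def ContStrongWeihrauchRed (f g : Problem) : Prop :=
  ∃ H K : Baire →. Baire, ContinuousPF H ∧ ContinuousPF K ∧
    ∀ G : Baire →. Baire, Realizes G g →
      Realizes (fun p => (K p).bind fun s => (G s).bind fun t => H t) f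

/-- Concatenation of the first `n` moves. -/
def concatN (ms : ℕ → List ℕ) (n : ℕ) : List ℕ := ((List.range n).map ms).flatten

/-- The concatenated play is infinite. -/
def PlayInf (ms : ℕ → List ℕ) : Prop := ∀ m : ℕ, ∃ n, m < (concatN ms n).length

/-- The infinite sequence determined by an infinite play. -/
noncomputable def playLim (ms : ℕ → List ℕ) : Baire :=
  Classical.epsilon fun p : Baire => ∀ n, IsPrefixOf (concatN ms n) p

/-- Player II wins the run of the Wadge game of `f` given by the moves `xs` of I and `ys` of II. -/
def WadgeIIWins (f : Problem) (xs ys : ℕ → List ℕ) : Prop :=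
  (PlayInf xs ∧ (f (playLim xs)).Nonempty) → (PlayInf ys ∧ playLim ys ∈ f (playLim xs))

/-- The list of first `n` moves. -/
def histW (xs : ℕ → List ℕ) (n : ℕ) : List (List ℕ) := (List.range n).map xs

/-- `σ` is a winning strategy for Player II in the Wadge game of `f`. -/
def WadgeWinningII (f : Problem) (σ : List (List ℕ) → List ℕ) : Prop :=
  ∀ xs : ℕ → List ℕ, WadgeIIWins f xs fun i => σ (histW xs (i + 1))

/-- `σ` is a winning strategy for Player I in the Wadge game of `f`. -/
def WadgeWinningI (f : Problem) (σ : List (List ℕ) → List ℕ) : Prop :=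
  ∀ ys : ℕ → List ℕ, ¬ WadgeIIWins f (fun i => σ (histW ys i)) ys

/-- The list of first `n` values of a sequence. -/
def histN (x : Baire) (n : ℕ) : List ℕ := (List.range n).map x

/-- Player II wins the run `(x,y)` of the Lipschitz game of `f`. -/
def LipIIWins (f : Problem) (x y : Baire) : Prop := (f x).Nonempty → y ∈ f x

/-- `σ` is a winning strategy for Player II in the Lipschitz game of `f`. -/
def LipWinningII (f : Problem) (σ : List ℕ → ℕ) : Prop :=
  ∀ x : Baire, LipIIWins f x fun i => σ (histN x (i + 1))

/-- `σ` is a winning strategy for Player I in the Lipschitz game of `f`. -/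
def LipWinningI (f : Problem) (σ : List ℕ → ℕ) : Prop :=
  ∀ y : Baire, ¬ LipIIWins f (fun i => σ (histN y i)) y

/-- `σ` is a winning strategy for Player II in the Gale–Stewart game `A`. -/
def GSWinningII (A : Set Baire) (σ : List ℕ → ℕ) : Prop :=
  ∀ x : Baire, bpair x (fun i => σ (histN x (i + 1))) ∈ A

/-- `σ` is a winning strategy for Player I in the Gale–Stewart game `A`. -/
def GSWinningI (A : Set Baire) (σ : List ℕ → ℕ) : Prop :=
  ∀ y : Baire, bpair (fun i => σ (histN y i)) y ∉ A

/-- The totalization `Tf` of `f`. -/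
def Totalization (f : Problem) : Problem := fun p => {q | (f p).Nonempty → q ∈ f p}

/-- The paired graph `⟨graph(Tf)⟩ ⊆ ℕ^ℕ`. -/
def pairedGraph (f : Problem) : Set Baire :=
  {r | ∃ x y : Baire, r = bpair x y ∧ y ∈ Totalization f x}

/-- Domain of the word concatenation map `w*`. -/
def wstarDom (p : Baire) : Prop := PlayInf fun i => word (p i)

/-- The word concatenation map `w* : p ↦ w(p 0) w(p 1) ⋯` (on its domain). -/
noncomputable def wstar (p : Baire) : Baire := playLim fun i => word (p i)

/-- The problem `f^w = w*⁻¹ ∘ f ∘ w*`. -/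
noncomputable def wordLift (f : Problem) : Problem := fun p =>
  {q | wstarDom p ∧ (f (wstar p)).Nonempty ∧ wstarDom q ∧ wstar q ∈ f (wstar p)}

/-- The `i`-th component of a tupled sequence. -/
def tupleComp (p : Baire) (i : ℕ) : Baire := fun n => p (cpair i n)

/-- The parallelization `⟨f⟩` of `f`. -/
def Parallelization (f : Problem) : Problem := fun p =>
  {q | ∀ i, tupleComp q i ∈ f (tupleComp p i)}

/-- Turing reducibility: `p` is computable relative to the oracle `q`. -/
def TuringLe (p q : Baire) : Prop := ∃ F : Baire →. Baire, ComputablePF F ∧ p ∈ F q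

end


noncomputable section ND


/-- The prefix of `x` of length `n`. -/
def pre (x : Baire) (n : ℕ) : List ℕ := (List.range n).map x

lemma pre_length (x : Baire) (n : ℕ) : (pre x n).length = n := by simp [pre]

lemma isPrefixOf_nil (p : Baire) : IsPrefixOf [] p := rfl

lemma isPrefixOf_pre (x : Baire) (n : ℕ) : IsPrefixOf (pre x n) x := by
  simp [IsPrefixOf, pre]

lemma IsPrefixOf.eval {l : List ℕ} {x : Baire} (h : IsPrefixOf l x) {k : ℕ}
    (hk : k < l.length) : l[k] = x k := by
  have := List.getElem_of_eq h hk
  simpa using this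

lemma eq_of_common_prefixes {x y : Baire}
    (h : ∀ m : ℕ, ∃ l : List ℕ, m < l.length ∧ IsPrefixOf l x ∧ IsPrefixOf l y) : x = y := by
  funext k
  obtain ⟨l, hk, hx, hy⟩ := h k
  rw [← hx.eval hk, ← hy.eval hk]

lemma tri_succ (s : ℕ) : (s + 1) * (s + 2) / 2 = s * (s + 1) / 2 + (s + 1) := by
  obtain ⟨t, ht⟩ := (Nat.even_mul_succ_self s).two_dvd
  have e : (s + 1) * (s + 2) = s * (s + 1) + 2 * (s + 1) := by ring
  omega

lemma tri_mono {s t : ℕ} (h : s ≤ t) : s * (s + 1) / 2 ≤ t * (t + 1) / 2 :=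
  Nat.div_le_div_right (Nat.mul_le_mul (by omega) (by omega))

lemma cpair_sum_eq {a b c d : ℕ} (h : cpair a b = cpair c d) : a + b = c + d := by
  rcases Nat.lt_trichotomy (a + b) (c + d) with h1 | h1 | h1
  · have h2 := tri_succ (a + b)
    have h3 := tri_mono (show a + b + 1 ≤ c + d by omega)
    rw [tri_succ] at h3
    unfold cpair at h
    omega
  · exact h1
  · have h2 := tri_succ (c + d)
    have h3 := tri_mono (show c + d + 1 ≤ a + b by omega)
    rw [tri_succ] at h3
    unfold cpair at h
    omega

lemma cpair_inj {a b c d : ℕ} (h : cpair a b = cpair c d) : a = c ∧ b = d := by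
  have hs := cpair_sum_eq h
  unfold cpair at h
  rw [hs] at h
  omega

lemma cunpair_cpair (n k : ℕ) : cunpair (cpair n k) = (n, k) := by
  have hex : ∃ x : ℕ × ℕ, cpair x.1 x.2 = cpair n k := ⟨(n, k), rfl⟩
  have hspec := Classical.epsilon_spec hex
  obtain ⟨h1, h2⟩ := cpair_inj hspec
  unfold cunpair
  exact Prod.ext h1 h2

lemma word_encode (l : List ℕ) : word (Encodable.encode l) = l :=
  Denumerable.ofNat_encode l


/-- Code for the constant function with value `y`. -/
def qcode (y : Baire) : Baire := fun i =>
  cpair (Encodable.encode ([] : List ℕ)) (Encodable.encode (pre y i))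

lemma wn_qcode (y : Baire) (i : ℕ) : wn (qcode y) i = [] := by
  unfold wn qcode
  rw [cunpair_cpair]
  exact word_encode []

lemma wk_qcode (y : Baire) (i : ℕ) : wk (qcode y) i = pre y i := by
  unfold wk qcode
  rw [cunpair_cpair]
  exact word_encode _

lemma pre_prefix (y : Baire) {i j : ℕ} (h : i ≤ j) : pre y i <+: pre y j := by
  have : pre y i = (pre y j).take i := by
    simp only [pre]
    rw [← List.map_take, List.take_range, min_eq_left h]
  rw [this]
  exact List.take_prefix _ _

lemma consistent_qcode (y : Baire) : ConsistentCode (qcode y) := by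
  intro i j _
  rw [WordComparable, wk_qcode, wk_qcode]
  rcases le_total i j with h | h
  · exact Or.inl (pre_prefix y h)
  · exact Or.inr (pre_prefix y h)

lemma mem_Phi_qcode (y p : Baire) : y ∈ Phi (qcode y) p := by
  have hdom : ConsistentCode (qcode y) ∧
      ∀ m : ℕ, ∃ i, IsPrefixOf (wn (qcode y) i) p ∧ m < (wk (qcode y) i).length := by
    refine ⟨consistent_qcode y, fun m => ⟨m + 1, ?_, ?_⟩⟩
    · rw [wn_qcode]; exact isPrefixOf_nil p
    · rw [wk_qcode, pre_length]; omega
  have hex : ∃ x : Baire, ∀ i, IsPrefixOf (wn (qcode y) i) p → IsPrefixOf (wk (qcode y) i) x :=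
    ⟨y, fun i _ => by rw [wk_qcode]; exact isPrefixOf_pre y i⟩
  have hspec := Classical.epsilon_spec hex
  have hval : (Classical.epsilon fun x : Baire =>
      ∀ i, IsPrefixOf (wn (qcode y) i) p → IsPrefixOf (wk (qcode y) i) x) = y := by
    refine eq_of_common_prefixes fun m => ⟨pre y (m + 1), ?_, ?_, isPrefixOf_pre y _⟩
    · rw [pre_length]; omega
    · have := hspec (m + 1) (by rw [wn_qcode]; exact isPrefixOf_nil p)
      rwa [wk_qcode] at this
  exact ⟨hdom, hval⟩

/-- The limit function of a word function `h`. -/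
def limFun (h : List ℕ → List ℕ) (p : Baire) : Baire :=
  Classical.epsilon fun x : Baire => ∀ v, IsPrefixOf v p → IsPrefixOf (h v) x

lemma limFun_eq {h : List ℕ → List ℕ} {F : Baire →. Baire} (hap : Approximates h F)
    (p : Baire) (hp : (F p).Dom) : limFun h p = (F p).get hp := by
  obtain ⟨h1, h2⟩ := hap p hp
  have hex : ∃ x : Baire, ∀ v, IsPrefixOf v p → IsPrefixOf (h v) x := ⟨_, h1⟩
  have hspec := Classical.epsilon_spec hex
  refine eq_of_common_prefixes fun m => ?_
  obtain ⟨v, hv, hm⟩ := h2 m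
  exact ⟨h v, hm, hspec v hv, h1 v hv⟩

open Cardinal in
lemma mk_baire : #Baire = 𝔠 := by
  simp [Baire, Cardinal.mk_arrow, Cardinal.aleph0_power_aleph0]

open Cardinal in
lemma aleph0_le_mk_baire : ℵ₀ ≤ #Baire := by
  rw [mk_baire]; exact Cardinal.aleph0_le_continuum

/-- The index type for the diagonalization. -/
def Iota : Type := (List ℕ → List ℕ) ⊕ {D : Baire → Baire // Continuous D}

open Cardinal in
lemma mk_cont_le : #{D : Baire → Baire // Continuous D} ≤ 𝔠 := by
  obtain ⟨s, hsc, hsd⟩ := TopologicalSpace.exists_countable_dense Baire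
  have : Countable s := hsc.to_subtype
  have hinj : Function.Injective
      (fun D : {D : Baire → Baire // Continuous D} => (fun x : s => D.1 x.1)) := by
    intro D E h
    refine Subtype.ext (Continuous.ext_on hsd D.2 E.2 fun x hx => ?_)
    exact congrFun h ⟨x, hx⟩
  calc #{D : Baire → Baire // Continuous D} ≤ #(s → Baire) := Cardinal.mk_le_of_injective hinj
    _ = #Baire ^ #s := by simp [Cardinal.mk_arrow]
    _ ≤ 𝔠 ^ #s := by
        exact Cardinal.power_le_power_right (le_of_eq mk_baire)
    _ ≤ 𝔠 ^ ℵ₀ := by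
        refine Cardinal.power_le_power_left Cardinal.continuum_ne_zero ?_
        exact Cardinal.mk_le_aleph0
    _ = 𝔠 := Cardinal.continuum_power_aleph0

open Cardinal in
lemma mk_iota_le : #Iota ≤ #Baire := by
  rw [mk_baire, Iota, Cardinal.mk_sum]
  simp only [Cardinal.lift_id]
  have h1 : #(List ℕ → List ℕ) ≤ 𝔠 := by
    rw [Cardinal.mk_arrow]
    simp [Cardinal.mk_list_eq_aleph0, Cardinal.aleph0_power_aleph0]
  calc #(List ℕ → List ℕ) + #{D : Baire → Baire // Continuous D} ≤ 𝔠 + 𝔠 :=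
        add_le_add h1 mk_cont_le
    _ = 𝔠 := Cardinal.add_eq_self Cardinal.aleph0_le_continuum

open Cardinal in
/-- An embedding of the index type into a well-ordered type of order type `ord 𝔠`. -/
def embI : Iota ↪ ((#Baire).ord).ToType := by
  have h : #Iota ≤ #(((#Baire).ord).ToType) := by
    rw [Cardinal.mk_toType, Cardinal.card_ord]
    exact mk_iota_le
  exact (Cardinal.le_def _ _).1 h |>.some

/-- The well-order on the index type. -/
def rI : Iota → Iota → Prop := fun i j => embI i < embI j

lemma rI_wf : WellFounded rI := InvImage.wf embI (IsWellFounded.wf)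

lemma rI_conn {i j : Iota} (h : i ≠ j) : rI i j ∨ rI j i := by
  rcases lt_trichotomy (embI i) (embI j) with h1 | h1 | h1
  · exact Or.inl h1
  · exact absurd (embI.injective h1) h
  · exact Or.inr h1

open Cardinal in
lemma mk_seg_lt (i : Iota) : #{j : Iota // rI j i} < #Baire := by
  have h1 : #{j : Iota // rI j i} ≤ #(Set.Iio (embI i)) :=
    Cardinal.mk_le_of_injective (f := fun j => ⟨embI j.1, j.2⟩)
      (fun a b h => Subtype.ext (embI.injective (congrArg Subtype.val h)))
  exact lt_of_le_of_lt h1 (Cardinal.mk_Iio_ord_toType (embI i))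

open Cardinal in
lemma exists_not_mem_of_small {S : Set Baire} (hS : #S < #Baire) : ∃ p, p ∉ S := by
  by_contra h
  push_neg at h
  have : S = Set.univ := Set.eq_univ_of_forall h
  rw [this, Cardinal.mk_univ] at hS
  exact hS.ne rfl

/-- The default value. -/
def d0 : Baire := fun _ => 0

/-- The body of the recursion. -/
def commitF : (i : Iota) → (∀ j, rI j i → Baire × Baire) → Baire × Baire :=
  fun i => match i with
  | Sum.inl h => fun rec =>
      let p := Classical.epsilon fun p : Baire => ∀ j, ∀ hj : rI j (Sum.inl h), (rec j hj).1 ≠ p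
      (p, limFun h p)
  | Sum.inr D => fun rec =>
      let y := Classical.epsilon fun y : Baire =>
        y ≠ d0 ∧ ∀ j, ∀ hj : rI j (Sum.inr D), (rec j hj).2 ≠ y
      (D.1 (qcode y), y)

/-- The transfinite sequence of commitments. -/
def commit : Iota → Baire × Baire := rI_wf.fix commitF

lemma commit_eq (i : Iota) : commit i = commitF i fun j _ => commit j :=
  rI_wf.fix_eq commitF i

lemma commit_inl (h : List ℕ → List ℕ) :
    commit (Sum.inl h) =
      ((Classical.epsilon fun p : Baire => ∀ j, rI j (Sum.inl h) → (commit j).1 ≠ p),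
       limFun h (Classical.epsilon fun p : Baire =>
         ∀ j, rI j (Sum.inl h) → (commit j).1 ≠ p)) := by
  refine (commit_eq _).trans ?_
  rfl

lemma commit_inr (D : {D : Baire → Baire // Continuous D}) :
    commit (Sum.inr D) =
      (D.1 (qcode (Classical.epsilon fun y : Baire =>
          y ≠ d0 ∧ ∀ j, rI j (Sum.inr D) → (commit j).2 ≠ y)),
       Classical.epsilon fun y : Baire =>
          y ≠ d0 ∧ ∀ j, rI j (Sum.inr D) → (commit j).2 ≠ y) := by
  refine (commit_eq _).trans ?_
  rfl

open Cardinal in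
lemma commit_inl_fresh (h : List ℕ → List ℕ) :
    ∀ j, rI j (Sum.inl h) → (commit j).1 ≠ (commit (Sum.inl h)).1 := by
  have hex : ∃ p : Baire, ∀ j, rI j (Sum.inl h) → (commit j).1 ≠ p := by
    have hsmall : #(Set.range fun j : {j : Iota // rI j (Sum.inl h)} => (commit j.1).1) <
        Cardinal.mk Baire := lt_of_le_of_lt Cardinal.mk_range_le (mk_seg_lt _)
    obtain ⟨p, hp⟩ := exists_not_mem_of_small hsmall
    exact ⟨p, fun j hj he => hp ⟨⟨j, hj⟩, he⟩⟩
  have hspec := Classical.epsilon_spec hex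
  rw [commit_inl]
  exact hspec

lemma commit_inl_snd (h : List ℕ → List ℕ) :
    (commit (Sum.inl h)).2 = limFun h (commit (Sum.inl h)).1 := by
  rw [commit_inl]

open Cardinal in
lemma commit_inr_spec (D : {D : Baire → Baire // Continuous D}) :
    (commit (Sum.inr D)).2 ≠ d0 ∧
      ∀ j, rI j (Sum.inr D) → (commit j).2 ≠ (commit (Sum.inr D)).2 := by
  have hex : ∃ y : Baire, y ≠ d0 ∧ ∀ j, rI j (Sum.inr D) → (commit j).2 ≠ y := by
    have hsmall : #(insert d0
        (Set.range fun j : {j : Iota // rI j (Sum.inr D)} => (commit j.1).2) : Set Baire) <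
        Cardinal.mk Baire := by
      refine lt_of_le_of_lt (Cardinal.mk_insert_le) ?_
      have h1 : #(Set.range fun j : {j : Iota // rI j (Sum.inr D)} => (commit j.1).2) < #Baire :=
        lt_of_le_of_lt Cardinal.mk_range_le (mk_seg_lt _)
      have h2 : (1 : Cardinal) < #Baire := lt_of_lt_of_le Cardinal.one_lt_aleph0 aleph0_le_mk_baire
      exact Cardinal.add_lt_of_lt aleph0_le_mk_baire h1 h2
    obtain ⟨y, hy⟩ := exists_not_mem_of_small hsmall
    exact ⟨y, fun he => hy (by rw [he]; exact Set.mem_insert _ _),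
      fun j hj he => hy (Set.mem_insert_iff.2 (Or.inr ⟨⟨j, hj⟩, he⟩))⟩
  have hspec := Classical.epsilon_spec hex
  rw [commit_inr]
  exact hspec

lemma commit_inr_fst (D : {D : Baire → Baire // Continuous D}) :
    (commit (Sum.inr D)).1 = D.1 (qcode (commit (Sum.inr D)).2) := by
  rw [commit_inr]

open scoped Classical in
/-- The diagonal function `c`. -/
def cfun : Baire → Baire := fun p =>
  if hp : ∃ h : List ℕ → List ℕ, (commit (Sum.inl h)).1 = p then
    (commit (Sum.inl hp.choose)).2
  else d0

lemma cfun_def {h : List ℕ → List ℕ} {p : Baire} (hp : (commit (Sum.inl h)).1 = p) :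
    cfun p = (commit (Sum.inl h)).2 := by
  have hex : ∃ h : List ℕ → List ℕ, (commit (Sum.inl h)).1 = p := ⟨h, hp⟩
  rw [cfun, dif_pos hex]
  have hh' := hex.choose_spec
  set h' := hex.choose with hh'def
  by_cases he : (Sum.inl h' : Iota) = Sum.inl h
  · rw [he]
  · rcases rI_conn he with hr | hr
    · exact absurd (hh'.trans hp.symm) (commit_inl_fresh h _ hr)
    · exact absurd (hp.trans hh'.symm) (commit_inl_fresh h' _ hr)

lemma cfun_d0 {p : Baire} (hp : ∀ h : List ℕ → List ℕ, (commit (Sum.inl h)).1 ≠ p) :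
    cfun p = d0 := by
  rw [cfun, dif_neg]
  rintro ⟨h, hh⟩
  exact hp h hh

/-- The diagonal problem. -/
def fprob : Problem := fun p => {q | q ≠ cfun p}

lemma fprob_nonempty (p : Baire) : (fprob p).Nonempty := by
  refine ⟨fun n => cfun p n + 1, fun he => ?_⟩
  have := congrFun he 0
  omega

end ND

/-- There exists a problem that is discontinuous but not effectively discontinuous. -/
theorem exists_discontinuous_not_effectively_discontinuous :
    ∃ f : Problem, ¬ ContinuousProblem f ∧ ¬ EffectivelyDiscontinuous f := by
  refine ⟨fprob, ?_, ?_⟩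
  · rintro ⟨F, ⟨h, _, happ⟩, hreal⟩
    set p := (commit (Sum.inl h)).1 with hp
    obtain ⟨hdom, hval⟩ := hreal p (fprob_nonempty p)
    have hc : cfun p = (commit (Sum.inl h)).2 := cfun_def rfl
    have h2 : (commit (Sum.inl h)).2 = limFun h p := commit_inl_snd h
    have h3 : limFun h p = (F p).get hdom := limFun_eq happ p hdom
    exact hval (by rw [hc, h2, h3])
  · rintro ⟨D, hD, hdisc⟩
    set y := (commit (Sum.inr ⟨D, hD⟩)).2 with hy
    set q := qcode y with hq
    have hfst : (commit (Sum.inr ⟨D, hD⟩)).1 = D q := commit_inr_fst ⟨D, hD⟩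
    obtain ⟨hy0, hyfresh⟩ := commit_inr_spec ⟨D, hD⟩
    have hymem : y ∈ Phi q (D q) := mem_Phi_qcode y (D q)
    have hnot := (hdisc q).2 y hymem
    have hyc : y = cfun (D q) := not_ne_iff.1 fun hne => hnot hne
    by_cases hcase : ∃ g : List ℕ → List ℕ, (commit (Sum.inl g)).1 = D q
    · obtain ⟨g, hg⟩ := hcase
      have hcd : cfun (D q) = (commit (Sum.inl g)).2 := cfun_def hg
      have hne : (Sum.inl g : Iota) ≠ Sum.inr ⟨D, hD⟩ := by simp
      rcases rI_conn hne with hr | hr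
      · exact hyfresh _ hr (hcd ▸ hyc.symm)
      · exact commit_inl_fresh g _ hr (hfst.trans hg.symm)
    · push_neg at hcase
      have hcd : cfun (D q) = d0 := cfun_d0 hcase
      exact hy0 (hyc.trans hcd)
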